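/- Let G be a finite group and H ⊆ G a subgroup such that the action of G on G/H by left translation is doubly transitive and such that for all distinct ω, ω' ∈ G/H every automorphism of the twofold stabiliser G_ω ∩ G_{ω'} is inner. Then any two subgroups U₁, U₂ ⊆ H that are conjugate in G are conjugate already in H. -/

import Mathlib

/-- G finite, H ≤ G with the action on G/H doubly transitive, and for all
distinct ω, ω' every automorphism of G_ω ∩ G_{ω'} is inner. Then subgroups U₁, U₂ ⊆ H
conjugate in G are conjugate already in H. -/
theorem stmt1 {G : Type*} [Group G] [Finite G] (H : Subgroup G)
    (h2trans : ∀ ω ω' τ τ' : G ⧸ H, ω ≠ ω' → τ ≠ τ' →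
      ∃ g : G, g • ω = τ ∧ g • ω' = τ')
    (hinner : ∀ ω ω' : G ⧸ H, ω ≠ ω' →
      ∀ f : (MulAction.stabilizer G ω ⊓ MulAction.stabilizer G ω' : Subgroup G) ≃*
            (MulAction.stabilizer G ω ⊓ MulAction.stabilizer G ω' : Subgroup G),
        ∃ c : (MulAction.stabilizer G ω ⊓ MulAction.stabilizer G ω' : Subgroup G),
          ∀ x, f x = c * x * c⁻¹)
    (U₁ U₂ : Subgroup G) (hU₁ : U₁ ≤ H) (hU₂ : U₂ ≤ H)
    (hconj : ∃ g : G, Subgroup.map (MulAut.conj g).toMonoidHom U₁ = U₂) :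
    ∃ h ∈ H, Subgroup.map (MulAut.conj h).toMonoidHom U₁ = U₂ := by
  obtain ⟨g, hg⟩ := hconj
  by_cases hgH : g ∈ H
  · exact ⟨g, hgH, hg⟩
  · set ω₀ : G ⧸ H := ((1 : G) : G ⧸ H) with hω₀
    set ω₁ : G ⧸ H := g • ω₀ with hω₁
    have hstab : MulAction.stabilizer G ω₀ = H := MulAction.stabilizer_quotient H
    have hmem : ∀ x : G, x • ω₀ = ω₀ ↔ x ∈ H := by
      intro x
      rw [hω₀]
      show ((x * 1 : G) : G ⧸ H) = ((1 : G) : G ⧸ H) ↔ _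
      rw [mul_one, QuotientGroup.eq]
      simp
    have hne : ω₀ ≠ ω₁ := by
      intro h
      exact hgH ((hmem g).mp h.symm)
    obtain ⟨t, ht0, ht1⟩ := h2trans ω₀ ω₁ ω₁ ω₀ hne hne.symm
    set D := (MulAction.stabilizer G ω₀ ⊓ MulAction.stabilizer G ω₁ : Subgroup G) with hD
    have hU₂D : U₂ ≤ D := by
      intro u hu
      rw [hD, Subgroup.mem_inf]
      constructor
      · rw [hstab]; exact hU₂ hu
      · rw [← hg] at hu
        obtain ⟨u₁, hu₁, rfl⟩ := hu
        have : u₁ ∈ MulAction.stabilizer G ω₀ := by rw [hstab]; exact hU₁ hu₁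
        show (MulAut.conj g u₁) • ω₁ = ω₁
        have : u₁ • ω₀ = ω₀ := this
        simp only [MulAut.conj_apply, hω₁, mul_smul, inv_smul_smul, this]
    have htD : ∀ x : G, x ∈ D → t * x * t⁻¹ ∈ D := by
      intro x hx
      rw [hD, Subgroup.mem_inf] at hx ⊢
      obtain ⟨hx0, hx1⟩ := hx
      constructor
      · show (t * x * t⁻¹) • ω₀ = ω₀
        have ht1' : t⁻¹ • ω₀ = ω₁ := by rw [← ht1, inv_smul_smul]
        rw [mul_smul, mul_smul, ht1', show x • ω₁ = ω₁ from hx1, ht1]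
      · show (t * x * t⁻¹) • ω₁ = ω₁
        have ht0' : t⁻¹ • ω₁ = ω₀ := by rw [← ht0, inv_smul_smul]
        rw [mul_smul, mul_smul, ht0', show x • ω₀ = ω₀ from hx0, ht0]
    have htD' : ∀ x : G, x ∈ D → t⁻¹ * x * t ∈ D := by
      intro x hx
      rw [hD, Subgroup.mem_inf] at hx ⊢
      obtain ⟨hx0, hx1⟩ := hx
      constructor
      · show (t⁻¹ * x * t) • ω₀ = ω₀
        rw [mul_smul, mul_smul, ht0, show x • ω₁ = ω₁ from hx1, ← ht0, inv_smul_smul]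
      · show (t⁻¹ * x * t) • ω₁ = ω₁
        rw [mul_smul, mul_smul, ht1, show x • ω₀ = ω₀ from hx0, ← ht1, inv_smul_smul]
    set f : D ≃* D :=
      { toFun := fun x => ⟨t * x * t⁻¹, htD x x.2⟩
        invFun := fun x => ⟨t⁻¹ * x * t, htD' x x.2⟩
        left_inv := fun x => by ext; simp; group
        right_inv := fun x => by ext; simp; group
        map_mul' := fun x y => by ext; show t * ((x * y : D) : G) * t⁻¹ = (t * x * t⁻¹) * (t * y * t⁻¹); rw [Subgroup.coe_mul]; group } with hf
    obtain ⟨c, hc⟩ := hinner ω₀ ω₁ hne f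
    have hc' : ∀ u : G, u ∈ D → t * u * t⁻¹ = (c : G) * u * (c : G)⁻¹ := by
      intro u hu
      have := hc ⟨u, hu⟩
      exact congrArg Subtype.val this
    set t' : G := (c : G)⁻¹ * t with ht'
    have ht'fix : ∀ u : G, u ∈ U₂ → t' * u * t'⁻¹ = u := by
      intro u hu
      have hc2 := hc' u (hU₂D hu)
      rw [ht']
      calc ((c:G)⁻¹ * t) * u * ((c:G)⁻¹ * t)⁻¹ = (c:G)⁻¹ * (t * u * t⁻¹) * c := by group
        _ = (c:G)⁻¹ * ((c:G) * u * (c:G)⁻¹) * c := by rw [hc2]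
        _ = u := by group
    have hcD := c.2
    rw [Subgroup.mem_inf] at hcD
    have hc0 : (c : G) • ω₀ = ω₀ := hcD.1
    have hc1 : (c : G) • ω₁ = ω₁ := hcD.2
    refine ⟨t' * g, ?_, ?_⟩
    · rw [← hmem]
      rw [mul_smul, ← hω₁, ht', mul_smul, ht1]
      exact inv_smul_eq_iff.mpr hc0.symm
    · have : Subgroup.map (MulAut.conj (t' * g)).toMonoidHom U₁ =
        Subgroup.map (MulAut.conj t').toMonoidHom (Subgroup.map (MulAut.conj g).toMonoidHom U₁) := by
        rw [Subgroup.map_map]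
        congr 1
        ext x
        simp [mul_assoc]
      rw [this, hg]
      ext x
      simp only [Subgroup.mem_map, MulEquiv.coe_toMonoidHom, MulAut.conj_apply]
      constructor
      · rintro ⟨u, hu, rfl⟩
        rwa [ht'fix u hu]
      · intro hx
        exact ⟨x, hx, ht'fix x hx⟩
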